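/- Let F be an algebraically closed field of characteristic 0, let n be a positive integer, and let H be a commutative subgroup of GL_n(F) all of whose elements have finite order. Then H is isomorphic to a subgroup of (ℚ/ℤ)^n, i.e., there exists an injective group homomorphism from H into (ℚ/ℤ)^n. -/

import Mathlib

open Complex Polynomial

noncomputable def expQHom : Multiplicative ℚ →* ℂˣ :=
  MonoidHom.toHomUnits
  { toFun := fun q => Complex.exp (2 * Real.pi * Complex.I * (q.toAdd : ℚ))
    map_one' := by simp
    map_mul' := by
      intro a b
      simp only [toAdd_mul, Rat.cast_add, mul_add, Complex.exp_add]
    }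

lemma expQHom_apply (q : ℚ) :
    (expQHom (Multiplicative.ofAdd q) : ℂ) = Complex.exp (2 * Real.pi * Complex.I * q) := rfl

lemma expQHom_int (k : ℤ) : expQHom (Multiplicative.ofAdd ((k : ℚ))) = 1 := by
  apply Units.ext
  rw [expQHom_apply]
  push_cast
  rw [mul_comm ((2:ℂ) * Real.pi * I) (k:ℂ)]
  exact Complex.exp_int_mul_two_pi_mul_I k

noncomputable def expCircleHom : Multiplicative (AddCircle (1 : ℚ)) →* ℂˣ :=
  AddMonoidHom.toMultiplicativeLeft
    (QuotientAddGroup.lift (AddSubgroup.zmultiples (1 : ℚ))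
      (MonoidHom.toAdditiveRight expQHom)
      (by
        rintro x ⟨k, rfl⟩
        have h1 : (k • (1:ℚ)) = ((k : ℚ)) := by simp
        have : expQHom (Multiplicative.ofAdd ((k • (1:ℚ)))) = 1 := by rw [h1]; exact expQHom_int k
        simpa using congrArg Additive.ofMul this))

lemma expCircleHom_coe (q : ℚ) :
    expCircleHom (Multiplicative.ofAdd ((q : AddCircle (1:ℚ)))) =
      expQHom (Multiplicative.ofAdd q) := rfl

lemma expCircleHom_injective : Function.Injective expCircleHom := by
  rw [injective_iff_map_eq_one]
  intro a ha
  obtain ⟨q, rfl⟩ : ∃ q : ℚ, Multiplicative.ofAdd ((q : AddCircle (1:ℚ))) = a := by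
    obtain ⟨x, rfl⟩ := Multiplicative.ofAdd.surjective a
    obtain ⟨q, rfl⟩ := QuotientAddGroup.mk_surjective x
    exact ⟨q, rfl⟩
  rw [expCircleHom_coe] at ha
  have hval : Complex.exp (2 * Real.pi * Complex.I * q) = 1 := by
    simpa [expQHom_apply] using congrArg Units.val ha
  rw [Complex.exp_eq_one_iff] at hval
  obtain ⟨k, hk⟩ := hval
  have h2 : (2 * Real.pi * Complex.I : ℂ) ≠ 0 :=
    mul_ne_zero (mul_ne_zero two_ne_zero (by exact_mod_cast Real.pi_ne_zero)) Complex.I_ne_zero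
  have hq : (q : ℂ) = (k : ℂ) := mul_left_cancel₀ h2 (by rw [hk, mul_comm])
  have : q = (k : ℚ) := by exact_mod_cast hq
  subst this
  have : ((k : ℚ) : AddCircle (1:ℚ)) = 0 := by
    rw [AddCircle.coe_eq_zero_iff]
    exact ⟨k, by simp⟩
  simp [this]

lemma expCircleHom_surj_torsion (u : ℂˣ) {m : ℕ} (hm : m ≠ 0) (hu : u ^ m = 1) :
    ∃ q, expCircleHom q = u := by
  have hz : (u : ℂ) ^ m = 1 := by rw [← Units.val_pow_eq_pow_val, hu, Units.val_one]
  have hz0 : (u : ℂ) ≠ 0 := u.ne_zero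
  obtain ⟨w, hw⟩ : ∃ w, Complex.exp w = (u : ℂ) := by
    have : (u : ℂ) ∈ Set.range Complex.exp := by rw [Complex.range_exp]; exact hz0
    exact this
  have hexp : Complex.exp (m * w) = 1 := by
    rw [Complex.exp_nat_mul, hw, hz]
  rw [Complex.exp_eq_one_iff] at hexp
  obtain ⟨k, hk⟩ := hexp
  refine ⟨Multiplicative.ofAdd (((k / m : ℚ) : AddCircle (1:ℚ))), ?_⟩
  apply Units.ext
  rw [expCircleHom_coe, expQHom_apply, ← hw]
  congr 1
  have hm' : (m : ℂ) ≠ 0 := Nat.cast_ne_zero.mpr hm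
  push_cast
  field_simp
  rw [mul_comm ((2:ℂ)*Real.pi*I) (k:ℂ), ← hk]

set_option synthInstance.maxHeartbeats 800000 in
set_option maxHeartbeats 1600000 in
lemma exists_torsion_embedding (F : Type*) [Field F] [CharZero F] :
    ∃ Ψ : CommGroup.torsion Fˣ →* Multiplicative (AddCircle (1 : ℚ)),
      Function.Injective Ψ := by
  set L := integralClosure ℚ F with hL
  have hfield : IsField L :=
    isField_of_isIntegral_of_isField' (Field.toIsField ℚ)
  letI : NoZeroSMulDivisors ℚ L :=
    inferInstance
  haveI : Algebra.IsIntegral ℚ L := integralClosure.AlgebraIsIntegral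
  haveI : Algebra.IsAlgebraic ℚ L := Algebra.IsIntegral.isAlgebraic
  let j : L →ₐ[ℚ] ℂ := IsAlgClosed.lift
  -- membership of torsion units in L
  have hmem : ∀ t : CommGroup.torsion Fˣ, ((t : Fˣ) : F) ∈ L := by
    rintro ⟨t, ht⟩
    obtain ⟨m, hm, hpow⟩ := isOfFinOrder_iff_pow_eq_one.mp ht
    refine ⟨Polynomial.X ^ m - 1, Polynomial.monic_X_pow_sub_C 1 hm.ne', ?_⟩
    have : ((t : F)) ^ m = 1 := by
      rw [← Units.val_pow_eq_pow_val, hpow, Units.val_one]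
    simp [Polynomial.eval₂_sub, this]
  let ι : CommGroup.torsion Fˣ →* L :=
    { toFun := fun t => ⟨((t : Fˣ) : F), hmem t⟩
      map_one' := rfl
      map_mul' := fun a b => rfl }
  have hjinj : Function.Injective j := by
    rw [injective_iff_map_eq_zero]
    intro a ha
    by_contra h0
    obtain ⟨b, hb⟩ := hfield.mul_inv_cancel h0
    have hone : (j a) * (j b) = 1 := by rw [← map_mul, hb, map_one]
    rw [ha, zero_mul] at hone
    exact zero_ne_one hone
  let φ : CommGroup.torsion Fˣ →* ℂˣ :=
    MonoidHom.toHomUnits ((j : L →+* ℂ).toMonoidHom.comp ι)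
  have hφinj : Function.Injective φ := by
    intro a b hab
    have h1 : j (ι a) = j (ι b) := congrArg Units.val hab
    have h2 : ι a = ι b := hjinj h1
    have h3 : ((a : Fˣ) : F) = ((b : Fˣ) : F) := congrArg Subtype.val h2
    exact Subtype.ext (Units.ext h3)
  have hφrange : ∀ t, φ t ∈ expCircleHom.range := by
    intro t
    obtain ⟨m, hm, hpow⟩ := isOfFinOrder_iff_pow_eq_one.mp t.2
    have hpow' : t ^ m = 1 := by
      apply Subtype.ext; simpa using hpow
    have : φ t ^ m = 1 := by rw [← map_pow, hpow', map_one]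
    obtain ⟨q, hq⟩ := expCircleHom_surj_torsion (φ t) hm.ne' this
    exact ⟨q, hq⟩
  let E := MonoidHom.ofInjective expCircleHom_injective
  refine ⟨E.symm.toMonoidHom.comp ((φ.codRestrict expCircleHom.range hφrange)), ?_⟩
  intro a b hab
  have h1 : (φ.codRestrict expCircleHom.range hφrange) a =
      (φ.codRestrict expCircleHom.range hφrange) b := E.symm.injective hab
  exact hφinj (congrArg Subtype.val h1)

set_option maxHeartbeats 1600000 in
/-- Let `F` be an algebraically closed field of characteristic 0, `n`
a positive integer, and `H` a commutative torsion subgroup of `GL_n(F)`.  Then `H`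
embeds into `(ℚ/ℤ)^n`: there is an injective group homomorphism `H → (ℚ/ℤ)^n`. -/
theorem commutative_torsion_linear_group_embeds_in_QmodZ_pow
    {F : Type*} [Field F] [IsAlgClosed F] [CharZero F]
    (n : ℕ) (hn : 0 < n)
    (H : Subgroup (Matrix.GeneralLinearGroup (Fin n) F))
    (hcomm : ∀ a ∈ H, ∀ b ∈ H, a * b = b * a)
    (htors : ∀ x ∈ H, IsOfFinOrder x) :
    ∃ f : H →* Multiplicative (Fin n → AddCircle (1 : ℚ)),
      Function.Injective f := by
  classical
  obtain ⟨Ψ, hΨ⟩ := exists_torsion_embedding F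
  let gm : H →* Module.End F (Fin n → F) :=
    (Matrix.toLinAlgEquiv'.toAlgHom.toRingHom.toMonoidHom).comp
      ((Units.coeHom (Matrix (Fin n) (Fin n) F)).comp H.subtype)
  have hgm_inj : Function.Injective gm := by
    intro a b hab
    exact Subtype.ext (Units.ext (Matrix.toLinAlgEquiv'.injective hab))
  have hpow : ∀ h : H, ∃ m : ℕ, 0 < m ∧ h ^ m = 1 := by
    intro h
    obtain ⟨m, hm, hp⟩ := isOfFinOrder_iff_pow_eq_one.mp (htors h.1 h.2)
    exact ⟨m, hm, Subtype.ext (by simpa using hp)⟩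
  have hss : ∀ h : H, (gm h).IsFinitelySemisimple := by
    intro h
    obtain ⟨m, hm, hp⟩ := hpow h
    have hsq : Squarefree ((Polynomial.X : F[X]) ^ m - 1) :=
      (Polynomial.X_pow_sub_one_separable_iff.mpr
        (Nat.cast_ne_zero.mpr hm.ne' : (m : F) ≠ 0)).squarefree
    have hmone : (gm h) ^ m = 1 := by rw [← map_pow, hp, map_one]
    have haev : (Polynomial.aeval (gm h)) ((Polynomial.X : F[X]) ^ m - 1) = 0 := by
      simp [hmone]
    exact (Module.End.isSemisimple_of_squarefree_aeval_eq_zero hsq haev).isFinitelySemisimple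
  have hcomm2 : ∀ a b : H, Commute (gm a) (gm b) := by
    intro a b
    have hab : a * b = b * a := Subtype.ext (hcomm a.1 a.2 b.1 b.2)
    show gm a * gm b = gm b * gm a
    rw [← map_mul, ← map_mul, hab]
  have heig : ∀ (h : H) (μ : F), (gm h).maxGenEigenspace μ = (gm h).eigenspace μ :=
    fun h μ => (hss h).maxGenEigenspace_eq_eigenspace μ
  have htop : ⨆ χ : H → F, ⨅ h : H, (gm h).eigenspace (χ h) = ⊤ := by
    have := Module.End.iSup_iInf_maxGenEigenspace_eq_top_of_iSup_maxGenEigenspace_eq_top_of_commute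
      (fun h : H => gm h) (fun a b _ => hcomm2 a b)
      (fun h => Module.End.iSup_maxGenEigenspace_eq_top (gm h))
    simpa only [heig] using this
  have hind : iSupIndep (fun χ : H → F => ⨅ h : H, (gm h).eigenspace (χ h)) := by
    have := Module.End.independent_iInf_maxGenEigenspace_of_forall_mapsTo (fun h : H => gm h)
      (fun i j φ => Module.End.mapsTo_maxGenEigenspace_of_comm (hcomm2 j i) φ)
    simpa only [heig] using this
  haveI : Fintype {χ : H → F // (⨅ h : H, (gm h).eigenspace (χ h)) ≠ ⊥} :=
    hind.fintypeNeBotOfFiniteDimensional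
  have hcard : Fintype.card {χ : H → F // (⨅ h : H, (gm h).eigenspace (χ h)) ≠ ⊥} ≤ n := by
    have := hind.subtype_ne_bot_le_finrank
    simpa [Module.finrank_fin_fun] using this
  obtain ⟨emb⟩ : Nonempty ({χ : H → F // (⨅ h : H, (gm h).eigenspace (χ h)) ≠ ⊥} ↪ Fin n) :=
    Function.Embedding.nonempty_of_card_le (by simpa using hcard)
  have hchar : ∀ s : {χ : H → F // (⨅ h : H, (gm h).eigenspace (χ h)) ≠ ⊥},
      ∃ c : H →* CommGroup.torsion Fˣ, ∀ h : H, ((c h : Fˣ) : F) = s.1 h := by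
    rintro ⟨χ, hχ⟩
    obtain ⟨v, hv, hv0⟩ := Submodule.exists_mem_ne_zero_of_ne_bot hχ
    have hvmem : ∀ h : H, (gm h) v = χ h • v := fun h =>
      Module.End.mem_eigenspace_iff.mp ((Submodule.mem_iInf _).mp hv h)
    have hone : χ 1 = 1 :=
      smul_left_injective F hv0 (show χ 1 • v = (1 : F) • v by
        rw [← hvmem 1, map_one, one_smul]; simp)
    have hmul : ∀ a b : H, χ (a * b) = χ a * χ b := by
      intro a b
      have h2 : (gm (a * b)) v = (χ a * χ b) • v := by
        rw [map_mul]
        show (gm a) ((gm b) v) = _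
        rw [hvmem b, map_smul, hvmem a, smul_smul, mul_comm]
      exact smul_left_injective F hv0
        (show χ (a * b) • v = (χ a * χ b) • v by rw [← hvmem (a * b), h2])
    let u : H →* F := { toFun := χ, map_one' := hone, map_mul' := hmul }
    refine ⟨u.toHomUnits.codRestrict (CommGroup.torsion Fˣ) (fun h => ?_), fun h => rfl⟩
    obtain ⟨m, hm, hp⟩ := hpow h
    exact isOfFinOrder_iff_pow_eq_one.mpr ⟨m, hm, by rw [← map_pow, hp, map_one]⟩
  choose c hc using hchar
  refine ⟨(MulEquiv.piMultiplicative (fun _ : Fin n => AddCircle (1 : ℚ))).symm.toMonoidHom.comp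
      (Pi.monoidHom (fun i => if hi : ∃ s, emb s = i then Ψ.comp (c hi.choose) else 1)), ?_⟩
  rw [injective_iff_map_eq_one]
  intro h hmap
  have hcomp : ∀ i : Fin n,
      (if hi : ∃ s, emb s = i then Ψ.comp (c hi.choose) else 1) h = 1 := by
    intro i
    have h0 : Pi.monoidHom (fun i => if hi : ∃ s, emb s = i then Ψ.comp (c hi.choose) else 1) h
        = 1 := by
      apply (MulEquiv.piMultiplicative (fun _ : Fin n => AddCircle (1 : ℚ))).symm.injective
      simpa [funext_iff] using hmap
    exact congrFun h0 i
  have hval : ∀ s : {χ : ↥H → F // (⨅ h' : ↥H, (gm h').eigenspace (χ h')) ≠ ⊥}, s.1 h = 1 := by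
    intro s
    have hi : ∃ s', emb s' = emb s := ⟨s, rfl⟩
    have h1 := hcomp (emb s)
    rw [dif_pos hi] at h1
    have hchoose : hi.choose = s := emb.injective hi.choose_spec
    rw [hchoose] at h1
    have h2 : c s h = 1 := hΨ (by rw [show Ψ (c s h) = 1 from h1, map_one])
    rw [← hc s h, h2]
    rfl
  have hfix : ∀ χ : H → F, (⨅ h' : H, (gm h').eigenspace (χ h')) ≤ (gm h).eigenspace 1 := by
    intro χ
    by_cases hb : (⨅ h' : H, (gm h').eigenspace (χ h')) = ⊥
    · rw [hb]; exact bot_le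
    · intro v hv
      have hv' : (gm h) v = χ h • v :=
        Module.End.mem_eigenspace_iff.mp ((Submodule.mem_iInf _).mp hv h)
      have hone : χ h = 1 := hval ⟨χ, hb⟩
      rw [Module.End.mem_eigenspace_iff, hv', hone]
  have hle : (⊤ : Submodule F (Fin n → F)) ≤ (gm h).eigenspace 1 := by
    rw [← htop]; exact iSup_le hfix
  have hgm1 : gm h = 1 := by
    apply LinearMap.ext
    intro v
    have := Module.End.mem_eigenspace_iff.mp (hle Submodule.mem_top (x := v))
    simpa using this
  exact hgm_inj (hgm1.trans (map_one gm).symm)
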